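/- The exponential generating function f(x) = Σ_{n≥1} t_n x^n/n!, where t_n is the number of rooted trees with n labeled leaves in which every internal vertex has at least two children (total partition trees / phylogenetic trees), satisfies the functional equation 1 − x + 2f(x) = exp(f(x)). -/

import Mathlib

/-- A rooted tree with leaves labeled bijectively by `X` in which every internal
vertex has at least two children, encoded as the laminar family of the leaf-label
sets of its vertices. -/
structure AssemblyTree (X : Type*) [Fintype X] where
  verts : Set (Set X)
  univ_mem : Set.univ ∈ verts
  singleton_mem : ∀ x : X, {x} ∈ verts
  nonempty_mem : ∀ A ∈ verts, A.Nonempty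
  laminar : ∀ A ∈ verts, ∀ B ∈ verts, A ⊆ B ∨ B ⊆ A ∨ A ∩ B = ∅
  two_children : ∀ A ∈ verts, ∀ B ∈ verts, B ⊂ A → ∃ C ∈ verts, C ⊂ A ∧ ¬ C ⊆ B

/-- `t n` is the number of rooted trees with `n` labeled leaves in which every
internal vertex has at least two children (total partitions). -/
noncomputable def t (n : ℕ) : ℕ := Nat.card (AssemblyTree (Fin n))

/-- The exponential generating function `f(x) = Σ_{n ≥ 1} t_n xⁿ/n!`. -/
noncomputable def f : PowerSeries ℚ :=
  PowerSeries.mk fun n => if n = 0 then 0 else (t n : ℚ) / n.factorial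

/-- The composition `exp ∘ f` of a power series `f` with zero constant term into the
exponential series: the coefficient of `xⁿ` is `Σ_k (coeff of xⁿ in fᵏ)/k!` (only
`k ≤ n` contribute since `f` has zero constant term). -/
noncomputable def expOf (F : PowerSeries ℚ) : PowerSeries ℚ :=
  PowerSeries.mk fun n =>
    ∑ k ∈ Finset.range (n + 1), (PowerSeries.coeff n (F ^ k)) / (Nat.factorial k)

open Finset
open scoped Classical

set_option linter.unusedSectionVars false

namespace AssemblyTree

variable {X Y : Type*} [Fintype X] [Fintype Y]

@[ext] lemma ext {T S : AssemblyTree X} (h : T.verts = S.verts) : T = S := by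
  cases T; cases S; congr

/-- `two_children` is implied by the other axioms. -/
def mk' (verts : Set (Set X)) (univ_mem : Set.univ ∈ verts)
    (singleton_mem : ∀ x : X, {x} ∈ verts)
    (nonempty_mem : ∀ A ∈ verts, A.Nonempty)
    (laminar : ∀ A ∈ verts, ∀ B ∈ verts, A ⊆ B ∨ B ⊆ A ∨ A ∩ B = ∅) :
    AssemblyTree X where
  verts := verts
  univ_mem := univ_mem
  singleton_mem := singleton_mem
  nonempty_mem := nonempty_mem
  laminar := laminar
  two_children := by
    intro A hA B hB hBA
    obtain ⟨x, hxA, hxB⟩ := Set.exists_of_ssubset hBA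
    refine ⟨{x}, singleton_mem x, ⟨Set.singleton_subset_iff.2 hxA, ?_⟩, by
      simp [Set.singleton_subset_iff, hxB]⟩
    intro hAx
    obtain ⟨b, hb⟩ := nonempty_mem B hB
    have : b = x := hAx (hBA.1 hb)
    exact hxB (this ▸ hb)

@[simp] lemma mk'_verts (v h1 h2 h3 h4) : (mk' (X := X) v h1 h2 h3 h4).verts = v := rfl

instance : Finite (AssemblyTree X) := by
  classical
  exact Finite.of_injective (fun T => T.verts) (fun T S h => ext h)

/-- Relabeling leaves along an equivalence. -/
def relabelFun (e : X ≃ Y) (T : AssemblyTree X) : AssemblyTree Y :=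
  mk' ((Set.image e) '' T.verts)
    ⟨Set.univ, T.univ_mem, by simp [Set.image_univ, e.surjective.range_eq]⟩
    (fun y => ⟨{e.symm y}, T.singleton_mem _, by simp⟩)
    (by rintro A ⟨A₀, hA₀, rfl⟩; exact (T.nonempty_mem A₀ hA₀).image e)
    (by
      rintro A ⟨A₀, hA₀, rfl⟩ B ⟨B₀, hB₀, rfl⟩
      rcases T.laminar A₀ hA₀ B₀ hB₀ with h | h | h
      · exact Or.inl (Set.image_mono h)
      · exact Or.inr (Or.inl (Set.image_mono h))
      · refine Or.inr (Or.inr ?_)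
        rw [← Set.image_inter e.injective, h, Set.image_empty])

lemma relabelFun_relabelFun (e : X ≃ Y) (T : AssemblyTree X) :
    relabelFun e.symm (relabelFun e T) = T := by
  ext1
  show (Set.image ⇑e.symm) '' ((Set.image ⇑e) '' T.verts) = T.verts
  rw [← Set.image_comp]
  have : (Set.image ⇑e.symm) ∘ (Set.image ⇑e) = id := by
    funext s
    simp [Set.image_image]
  rw [this, Set.image_id]

/-- Relabeling as an equivalence. -/
def relabel (e : X ≃ Y) : AssemblyTree X ≃ AssemblyTree Y where
  toFun := relabelFun e
  invFun := relabelFun e.symm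
  left_inv T := relabelFun_relabelFun e T
  right_inv T := by simpa using relabelFun_relabelFun e.symm T

lemma card_eq (Y : Type*) [Fintype Y] : Nat.card (AssemblyTree Y) = t (Fintype.card Y) :=
  Nat.card_congr (relabel (Fintype.equivFin Y)).symm |>.symm

end AssemblyTree

lemma t_zero : t 0 = 0 := by
  have : IsEmpty (AssemblyTree (Fin 0)) := by
    constructor
    intro T
    obtain ⟨x, -⟩ := T.nonempty_mem _ T.univ_mem
    exact x.elim0
  simp [t, Nat.card_of_isEmpty]

lemma t_one : t 1 = 1 := by
  have : ∀ T : AssemblyTree (Fin 1), T.verts = {Set.univ} := by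
    intro T
    apply Set.eq_singleton_iff_unique_mem.2
    refine ⟨T.univ_mem, fun A hA => ?_⟩
    obtain ⟨a, ha⟩ := T.nonempty_mem A hA
    apply Set.eq_univ_of_forall
    intro x
    have : x = a := Subsingleton.elim x a
    exact this ▸ ha
  have h1 : Nonempty (AssemblyTree (Fin 1)) :=
    ⟨AssemblyTree.mk' {Set.univ} rfl
      (fun x => by
        have : ({x} : Set (Fin 1)) = Set.univ :=
          Set.eq_univ_of_forall (fun y => (Subsingleton.elim y x : y = x) ▸ rfl)
        rw [this]; rfl)
      (by rintro A rfl; exact ⟨0, trivial⟩)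
      (by rintro A rfl B rfl; exact Or.inl le_rfl)⟩
  have : Subsingleton (AssemblyTree (Fin 1)) :=
    ⟨fun T S => AssemblyTree.ext ((this T).trans (this S).symm)⟩
  rw [t, Nat.card_eq_one_iff_unique]
  exact ⟨‹_›, h1⟩


structure Partn (X : Type*) [Fintype X] [DecidableEq X] where
  parts : Finset (Finset X)
  nonempty_parts : ∀ B ∈ parts, B.Nonempty
  disj : ∀ B ∈ parts, ∀ C ∈ parts, B ≠ C → ∀ x, x ∈ B → x ∉ C
  cover : ∀ x : X, ∃ B ∈ parts, x ∈ B

namespace Partn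

variable {X : Type*} [Fintype X] [DecidableEq X]

@[ext] lemma ext {π ρ : Partn X} (h : π.parts = ρ.parts) : π = ρ := by
  cases π; cases ρ; congr

noncomputable instance : Fintype (Partn X) := by
  classical
  exact Fintype.ofInjective (fun π => π.parts) (fun π ρ h => ext h)

lemma eq_of_mem (π : Partn X) {B C : Finset X} (hB : B ∈ π.parts) (hC : C ∈ π.parts)
    {x : X} (hxB : x ∈ B) (hxC : x ∈ C) : B = C := by
  by_contra h
  exact π.disj B hB C hC h x hxB hxC

/-- The block containing `x`. -/
noncomputable def part (π : Partn X) (x : X) : Finset X := (π.cover x).choose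

lemma part_mem (π : Partn X) (x : X) : π.part x ∈ π.parts := (π.cover x).choose_spec.1

lemma mem_part (π : Partn X) (x : X) : x ∈ π.part x := (π.cover x).choose_spec.2

lemma part_eq (π : Partn X) {B : Finset X} (hB : B ∈ π.parts) {x : X} (hx : x ∈ B) :
    π.part x = B := π.eq_of_mem (π.part_mem x) hB (π.mem_part x) hx

lemma card_parts_le (π : Partn X) : π.parts.card ≤ Fintype.card X := by
  classical
  have h1 : π.parts.card = ∑ B ∈ π.parts, 1 := by simp
  have h2 : ∑ B ∈ π.parts, 1 ≤ ∑ B ∈ π.parts, B.card :=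
    Finset.sum_le_sum (fun B hB => (π.nonempty_parts B hB).card_pos)
  have h3 : ∑ B ∈ π.parts, B.card = Fintype.card X := by
    rw [← Finset.card_biUnion]
    · congr 1
      apply Finset.eq_univ_of_forall
      intro x
      simp only [Finset.mem_biUnion, id]
      exact π.cover x
    · intro B hB C hC hBC
      show Disjoint B C
      rw [Finset.disjoint_left]
      exact fun a haB haC => π.disj B hB C hC hBC a haB haC
  omega

end Partn


section Fibers

set_option linter.unusedSectionVars false
variable {X : Type*} [Fintype X] [DecidableEq X] {k : ℕ}

/-- The fiber of `g` over `i`, as a finset. -/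
def fib (g : X → Fin k) (i : Fin k) : Finset X := univ.filter (g · = i)

@[simp] lemma mem_fib {g : X → Fin k} {i : Fin k} {x : X} : x ∈ fib g i ↔ g x = i := by
  simp [fib]

/-- The partition induced by a function. -/
def fibPartn (g : X → Fin k) : Partn X where
  parts := (univ.image (fib g)).filter (·.Nonempty)
  nonempty_parts := by intro B hB; exact (mem_filter.1 hB).2
  disj := by
    intro B hB C hC hBC x hxB hxC
    obtain ⟨i, -, rfl⟩ := mem_image.1 (mem_filter.1 hB).1
    obtain ⟨j, -, rfl⟩ := mem_image.1 (mem_filter.1 hC).1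
    exact hBC (by rw [← mem_fib.1 hxB, ← mem_fib.1 hxC])
  cover := fun x => ⟨fib g (g x), mem_filter.2 ⟨mem_image.2 ⟨g x, mem_univ _, rfl⟩, ⟨x, mem_fib.2 rfl⟩⟩,
    mem_fib.2 rfl⟩

lemma mem_fibPartn_parts {g : X → Fin k} {B : Finset X} :
    B ∈ (fibPartn g).parts ↔ (∃ i, B = fib g i) ∧ B.Nonempty := by
  simp only [fibPartn, mem_filter, mem_image, mem_univ, true_and]
  tauto

lemma fib_injOn {g : X → Fin k} {i j : Fin k} (h : fib g i = fib g j)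
    (hne : (fib g i).Nonempty) : i = j := by
  obtain ⟨x, hx⟩ := hne
  have hx' : x ∈ fib g j := h ▸ hx
  rw [← mem_fib.1 hx, mem_fib.1 hx']

/-- If `fibPartn g` has `k` parts, all fibers of `g` are nonempty. -/
lemma fib_nonempty_of_card {g : X → Fin k} (h : (fibPartn g).parts.card = k) (i : Fin k) :
    (fib g i).Nonempty := by
  classical
  have hparts : (fibPartn g).parts
      = (univ.filter (fun i : Fin k => (fib g i).Nonempty)).image (fib g) := by
    apply Finset.ext
    intro B
    simp only [mem_fibPartn_parts, mem_image, mem_filter, mem_univ, true_and]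
    constructor
    · rintro ⟨⟨i, rfl⟩, hne⟩; exact ⟨i, hne, rfl⟩
    · rintro ⟨i, hne, rfl⟩; exact ⟨⟨i, rfl⟩, hne⟩
  have h1 : (fibPartn g).parts.card ≤ (univ.filter (fun i : Fin k => (fib g i).Nonempty)).card :=
    hparts ▸ Finset.card_image_le
  have h2 : (univ.filter (fun i : Fin k => (fib g i).Nonempty)).card ≤ k := by
    simpa using Finset.card_filter_le univ (fun i : Fin k => (fib g i).Nonempty)
  have huniv : univ.filter (fun i : Fin k => (fib g i).Nonempty) = univ := by
    apply Finset.eq_univ_of_card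
    simp only [Fintype.card_fin]
    omega
  have : i ∈ univ.filter (fun i : Fin k => (fib g i).Nonempty) := by
    rw [huniv]; exact mem_univ i
  exact (mem_filter.1 this).2

lemma card_fibPartn_of_nonempty {g : X → Fin k} (h : ∀ i, (fib g i).Nonempty) :
    (fibPartn g).parts.card = k := by
  classical
  have hparts : (fibPartn g).parts = univ.image (fib g) := by
    apply Finset.ext
    intro B
    simp only [mem_fibPartn_parts, mem_image, mem_univ, true_and]
    constructor
    · rintro ⟨⟨i, rfl⟩, -⟩; exact ⟨i, rfl⟩
    · rintro ⟨i, rfl⟩; exact ⟨⟨i, rfl⟩, h i⟩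
  rw [hparts, Finset.card_image_of_injOn (fun i _ j _ hij => fib_injOn hij (h i)), card_univ,
    Fintype.card_fin]

lemma g_const_on_part {g : X → Fin k} {π : Partn X} (hg : fibPartn g = π)
    {B : Finset X} (hB : B ∈ π.parts) {x y : X} (hx : x ∈ B) (hy : y ∈ B) : g x = g y := by
  subst hg
  obtain ⟨⟨i, rfl⟩, -⟩ := mem_fibPartn_parts.1 hB
  rw [mem_fib.1 hx, mem_fib.1 hy]

lemma fib_mem_parts {g : X → Fin k} {i : Fin k} (hne : (fib g i).Nonempty) :
    fib g i ∈ (fibPartn g).parts := mem_fibPartn_parts.2 ⟨⟨i, rfl⟩, hne⟩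

lemma part_fibPartn (g : X → Fin k) (x : X) : (fibPartn g).part x = fib g (g x) :=
  (fibPartn g).part_eq (fib_mem_parts ⟨x, mem_fib.2 rfl⟩) (mem_fib.2 rfl)

/-- Functions inducing a given partition with `k` parts correspond to embeddings of parts. -/
noncomputable def fiberEquiv (π : Partn X) :
    {g : X → Fin k // fibPartn g = π} ≃ (↥π.parts ↪ Fin k) where
  toFun gh :=
    ⟨fun B => gh.1 (π.nonempty_parts B.1 B.2).choose, by
      obtain ⟨g, rfl⟩ := gh
      rintro ⟨B, hB⟩ ⟨C, hC⟩ h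
      simp only at h
      have hxB := (Partn.nonempty_parts _ B hB).choose_spec
      have hxC := (Partn.nonempty_parts _ C hC).choose_spec
      have eB : B = (fibPartn g).part _ := ((fibPartn g).part_eq hB hxB).symm
      have eC : C = (fibPartn g).part _ := ((fibPartn g).part_eq hC hxC).symm
      apply Subtype.ext
      show B = C
      rw [eB, eC, part_fibPartn, part_fibPartn, h]⟩
  invFun h :=
    ⟨fun x => h ⟨π.part x, π.part_mem x⟩, by
      apply Partn.ext
      apply Finset.ext
      intro B
      rw [mem_fibPartn_parts]
      constructor
      · rintro ⟨⟨i, rfl⟩, ⟨x, hx⟩⟩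
        have hgx : h ⟨π.part x, π.part_mem x⟩ = i :=
          (mem_fib (g := fun y => h ⟨π.part y, π.part_mem y⟩)).1 hx
        have hfib : fib (fun y => (h ⟨π.part y, π.part_mem y⟩ : Fin k)) i = π.part x := by
          apply Finset.ext
          intro y
          simp only [mem_fib]
          constructor
          · intro hy
            have hsub : (⟨π.part y, π.part_mem y⟩ : ↥π.parts) = ⟨π.part x, π.part_mem x⟩ :=
              h.injective (hy.trans hgx.symm)
            have hpp : π.part y = π.part x := Subtype.ext_iff.1 hsub
            exact hpp ▸ π.mem_part y
          · intro hy
            have hpp : π.part y = π.part x := π.part_eq (π.part_mem x) hy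
            have hsub : (⟨π.part y, π.part_mem y⟩ : ↥π.parts) = ⟨π.part x, π.part_mem x⟩ :=
              Subtype.ext hpp
            rw [hsub, hgx]
        rw [hfib]
        exact π.part_mem x
      · intro hB
        refine ⟨⟨h ⟨B, hB⟩, ?_⟩, π.nonempty_parts B hB⟩
        apply Finset.ext
        intro y
        simp only [mem_fib]
        constructor
        · intro hy
          have hpy : π.part y = B := π.part_eq hB hy
          have hsub : (⟨π.part y, π.part_mem y⟩ : ↥π.parts) = ⟨B, hB⟩ := Subtype.ext hpy
          rw [hsub]
        · intro hy
          have hsub : (⟨π.part y, π.part_mem y⟩ : ↥π.parts) = ⟨B, hB⟩ := h.injective hy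
          have hpy : π.part y = B := Subtype.ext_iff.1 hsub
          exact hpy ▸ π.mem_part y⟩
  left_inv := by
    rintro ⟨g, hg⟩
    apply Subtype.ext
    funext x
    simp only
    have hc := (π.nonempty_parts (π.part x) (π.part_mem x)).choose_spec
    exact g_const_on_part hg (π.part_mem x) hc (π.mem_part x)
  right_inv := by
    intro h
    apply Function.Embedding.ext
    rintro ⟨B, hB⟩
    simp only [Function.Embedding.coeFn_mk]
    have hc := (π.nonempty_parts B hB).choose_spec
    have : π.part ((π.nonempty_parts B hB).choose) = B := π.part_eq hB hc
    exact congrArg h (Subtype.ext this)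

lemma card_fiber (π : Partn X) (hk : π.parts.card = k) :
    (univ.filter (fun g : X → Fin k => fibPartn g = π)).card = k.factorial := by
  rw [← Fintype.card_subtype]
  rw [Fintype.card_congr (fiberEquiv π), Fintype.card_embedding_eq, Fintype.card_coe, hk,
    Fintype.card_fin, Nat.descFactorial_self]

/-- The main grouping identity. -/
lemma sum_weights (X : Type*) [Fintype X] [DecidableEq X] (k : ℕ) :
    ∑ g : X → Fin k, ∏ i, t (fib g i).card
      = k.factorial * ∑ π ∈ univ.filter (fun π : Partn X => π.parts.card = k),
          ∏ B ∈ π.parts, t B.card := by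
  classical
  rw [← Finset.sum_fiberwise univ (fun g : X → Fin k => fibPartn g) (fun g => ∏ i, t (fib g i).card)]
  rw [Finset.mul_sum, ← Finset.sum_filter_add_sum_filter_not univ (fun π : Partn X => π.parts.card = k)]
  have hz : ∑ π ∈ univ.filter (fun π : Partn X => ¬ π.parts.card = k),
      ∑ g ∈ univ.filter (fun g : X → Fin k => fibPartn g = π), ∏ i, t (fib g i).card = 0 := by
    apply Finset.sum_eq_zero
    intro π hπ
    apply Finset.sum_eq_zero
    intro g hg
    have hgp : fibPartn g = π := (mem_filter.1 hg).2
    have hcard : ¬ π.parts.card = k := (mem_filter.1 hπ).2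
    have : ∃ i, ¬ (fib g i).Nonempty := by
      by_contra hall
      push_neg at hall
      exact hcard (hgp ▸ card_fibPartn_of_nonempty hall)
    obtain ⟨i, hi⟩ := this
    apply Finset.prod_eq_zero (mem_univ i)
    rw [Finset.not_nonempty_iff_eq_empty.1 hi]
    simpa using t_zero
  rw [hz, add_zero]
  apply Finset.sum_congr rfl
  intro π hπ
  have hk : π.parts.card = k := (mem_filter.1 hπ).2
  have hconst : ∀ g ∈ univ.filter (fun g : X → Fin k => fibPartn g = π),
      ∏ i, t (fib g i).card = ∏ B ∈ π.parts, t B.card := by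
    intro g hg
    have hgp : fibPartn g = π := (mem_filter.1 hg).2
    have hne : ∀ i, (fib g i).Nonempty := fib_nonempty_of_card (hgp ▸ hk)
    have hparts : π.parts = univ.image (fib g) := by
      rw [← hgp]
      apply Finset.ext
      intro B
      simp only [mem_fibPartn_parts, mem_image, mem_univ, true_and]
      constructor
      · rintro ⟨⟨i, rfl⟩, -⟩; exact ⟨i, rfl⟩
      · rintro ⟨i, rfl⟩; exact ⟨⟨i, rfl⟩, hne i⟩
    rw [hparts, Finset.prod_image (fun i _ j _ hij => fib_injOn hij (hne i))]
  rw [Finset.sum_congr rfl hconst, Finset.sum_const, card_fiber π hk, smul_eq_mul]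


section M

variable {k n : ℕ}

private lemma sigma_fst_cast {l : Fin k → ℕ} (y : Σ i, Fin (l i)) (i : Fin k) (h : y.1 = i) :
    (⟨i, Fin.cast (congrArg l h) y.2⟩ : Σ i, Fin (l i)) = y := by
  rcases y with ⟨a, b⟩
  cases h
  rfl

private lemma cast_snd {l : Fin k → ℕ} (y : Σ i, Fin (l i)) (i : Fin k) (j : Fin (l i))
    (hy : y = ⟨i, j⟩) (h1 : y.1 = i) : Fin.cast (congrArg l h1) y.2 = j := by
  cases hy
  rfl

private lemma mk_snd {l : Fin k → ℕ} (g : Fin n → Fin k)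
    (E : ∀ i, ↥(fib g i) ≃ Fin (l i)) (x : Fin n) (i : Fin k) (hx : g x = i)
    (hmem : x ∈ fib g i) :
    (⟨g x, E (g x) ⟨x, mem_fib.2 rfl⟩⟩ : Σ i, Fin (l i)) = ⟨i, E i ⟨x, hmem⟩⟩ := by
  cases hx
  rfl

/-- Bijections `Fin n ≃ Σ i, Fin (l i)` correspond to functions `g` together with
bijections of each fiber of `g` with `Fin (l i)`. -/
noncomputable def bigEquiv (l : Fin k → ℕ) :
    (Fin n ≃ Σ i, Fin (l i)) ≃ (Σ g : Fin n → Fin k, ∀ i, ↥(fib g i) ≃ Fin (l i)) where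
  toFun e :=
    ⟨fun x => (e x).1, fun i =>
      { toFun := fun x => Fin.cast (congrArg l (mem_fib.1 x.2)) (e x.1).2
        invFun := fun j => ⟨e.symm ⟨i, j⟩, mem_fib.2 (by simp)⟩
        left_inv := by
          rintro ⟨x, hx⟩
          apply Subtype.ext
          have hgx : (e x).1 = i := (mem_fib (g := fun y => (e y).1)).1 hx
          exact (congrArg e.symm (sigma_fst_cast (e x) i hgx)).trans (e.symm_apply_apply x)
        right_inv := by
          intro j
          exact cast_snd (e (e.symm ⟨i, j⟩)) i j (e.apply_symm_apply _)
            ((mem_fib (g := fun y => (e y).1)).1 (by simp)) }⟩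
  invFun gE :=
    { toFun := fun x => ⟨gE.1 x, gE.2 (gE.1 x) ⟨x, mem_fib.2 rfl⟩⟩
      invFun := fun y => ((gE.2 y.1).symm y.2).1
      left_inv := by
        intro x
        simp only
        have : (⟨x, mem_fib.2 rfl⟩ : ↥(fib gE.1 (gE.1 x)))
            = (gE.2 (gE.1 x)).symm (gE.2 (gE.1 x) ⟨x, mem_fib.2 rfl⟩) :=
          ((gE.2 (gE.1 x)).symm_apply_apply _).symm
        rw [← this]
      right_inv := by
        rintro ⟨i, j⟩
        have hmem := ((gE.2 i).symm j).2
        have hx : gE.1 (((gE.2 i).symm j) : _) = i := mem_fib.1 hmem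
        have h2 : (⟨(((gE.2 i).symm j) : _), hmem⟩ : ↥(fib gE.1 i)) = (gE.2 i).symm j :=
          Subtype.ext rfl
        exact (mk_snd gE.1 gE.2 _ i hx hmem).trans (by rw [h2, Equiv.apply_symm_apply]) }
  left_inv := by
    intro e
    apply Equiv.ext
    intro x
    exact sigma_fst_cast (e x) _ rfl
  right_inv := by
    rintro ⟨g, E⟩
    apply Sigma.ext
    · rfl
    · apply heq_of_eq
      funext i
      apply Equiv.ext
      rintro ⟨x, hx⟩
      have hgx : g x = i := mem_fib.1 hx
      exact cast_snd ⟨g x, E (g x) ⟨x, mem_fib.2 rfl⟩⟩ i (E i ⟨x, hx⟩)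
        (mk_snd g E x i hgx hx) hgx

lemma card_equiv_fiber {X : Type*} [Fintype X] [DecidableEq X] (g : X → Fin k)
    (l : Fin k → ℕ) (i : Fin k) :
    Fintype.card (↥(fib g i) ≃ Fin (l i))
      = if (fib g i).card = l i then (l i).factorial else 0 := by
  split_ifs with h
  · rw [Fintype.card_equiv (Fintype.equivOfCardEq
      (by rw [Fintype.card_coe, Fintype.card_fin, h])), Fintype.card_coe, h]
  · rw [Fintype.card_eq_zero_iff]
    constructor
    intro e
    exact h (by rw [← Fintype.card_fin (l i), ← Fintype.card_congr e, Fintype.card_coe])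

/-- The multinomial counting lemma: the number of functions with prescribed fiber sizes. -/
lemma multinomial_count (l : Fin k → ℕ) (h : ∑ i, l i = n) :
    (univ.filter (fun g : Fin n → Fin k => ∀ i, (fib g i).card = l i)).card
      * ∏ i, (l i).factorial = n.factorial := by
  have e0 : Fin n ≃ Σ i, Fin (l i) :=
    Fintype.equivOfCardEq (by simp [Fintype.card_sigma, h])
  have hcardL : Fintype.card (Fin n ≃ Σ i, Fin (l i)) = n.factorial := by
    rw [Fintype.card_equiv e0, Fintype.card_fin]
  rw [← hcardL, Fintype.card_congr (bigEquiv l), Fintype.card_sigma]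
  have hterm : ∀ g : Fin n → Fin k, Fintype.card (∀ i, ↥(fib g i) ≃ Fin (l i))
      = if (∀ i, (fib g i).card = l i) then ∏ i, (l i).factorial else 0 := by
    intro g
    rw [Fintype.card_pi]
    split_ifs with hg
    · exact Finset.prod_congr rfl fun i _ => by rw [card_equiv_fiber, if_pos (hg i)]
    · push_neg at hg
      obtain ⟨i, hi⟩ := hg
      apply Finset.prod_eq_zero (mem_univ i)
      rw [card_equiv_fiber, if_neg hi]
  rw [Finset.sum_congr rfl fun g _ => hterm g, ← Finset.sum_filter, Finset.sum_const,
    smul_eq_mul]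

end M

lemma coeff_f (m : ℕ) : PowerSeries.coeff m f = (t m : ℚ) / m.factorial := by
  rw [f, PowerSeries.coeff_mk]
  split_ifs with h
  · subst h; simp [t_zero]
  · rfl

section L1

variable {k n : ℕ}

noncomputable def sz (g : Fin n → Fin k) : Fin k →₀ ℕ :=
  Finsupp.equivFunOnFinite.symm (fun i => (fib g i).card)

lemma sz_apply (g : Fin n → Fin k) (i : Fin k) : sz g i = (fib g i).card := rfl

lemma sum_card_fib (g : Fin n → Fin k) : ∑ i, (fib g i).card = n := by
  have h := Finset.sum_fiberwise univ g (fun _ => (1 : ℕ))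
  have h2 : ∑ i, (fib g i).card = ∑ j, ∑ x ∈ univ.filter (fun x => g x = j), (1 : ℕ) :=
    Finset.sum_congr rfl fun i _ => Finset.card_eq_sum_ones _
  rw [h2, h]
  simp

lemma sz_eq_iff (g : Fin n → Fin k) (l : Fin k →₀ ℕ) :
    sz g = l ↔ ∀ i, (fib g i).card = l i := by
  constructor
  · intro h i
    rw [← sz_apply g i, h]
  · intro h
    ext i
    rw [sz_apply, h i]

lemma L1 (k n : ℕ) :
    (n.factorial : ℚ) * (PowerSeries.coeff n (f ^ k))
      = ∑ g : Fin n → Fin k, ((∏ i, t (fib g i).card : ℕ) : ℚ) := by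
  have hpow : f ^ k = ∏ _i : Fin k, f := by
    rw [Finset.prod_const, card_univ, Fintype.card_fin]
  have hmaps : ∀ g ∈ (univ : Finset (Fin n → Fin k)), sz g ∈ finsuppAntidiag univ n := by
    intro g _
    rw [Finset.mem_finsuppAntidiag]
    refine ⟨?_, fun i _ => mem_univ i⟩
    rw [show (univ.sum fun i => sz g i) = ∑ i, (fib g i).card from
      Finset.sum_congr rfl (fun i _ => sz_apply g i)]
    exact sum_card_fib g
  rw [hpow, PowerSeries.coeff_prod, Finset.mul_sum,
    ← Finset.sum_fiberwise_of_maps_to hmaps (fun g => ((∏ i, t (fib g i).card : ℕ) : ℚ))]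
  apply Finset.sum_congr rfl
  intro l hl
  obtain ⟨hsum, -⟩ := Finset.mem_finsuppAntidiag.1 hl
  -- right side: constant on the fiber
  have hconst : ∀ g ∈ univ.filter (fun g : Fin n → Fin k => sz g = l),
      ((∏ i, t (fib g i).card : ℕ) : ℚ) = ((∏ i, t (l i) : ℕ) : ℚ) := by
    intro g hg
    have h := (sz_eq_iff g l).1 (mem_filter.1 hg).2
    congr 1
    exact Finset.prod_congr rfl fun i _ => by rw [h i]
  have hfilter : univ.filter (fun g : Fin n → Fin k => sz g = l)
      = univ.filter (fun g : Fin n → Fin k => ∀ i, (fib g i).card = l i) := by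
    apply Finset.filter_congr
    intro g _
    exact sz_eq_iff g l
  rw [Finset.sum_congr rfl hconst, Finset.sum_const, hfilter, nsmul_eq_mul]
  -- left side: coefficients
  have hc : ∀ i ∈ (univ : Finset (Fin k)), PowerSeries.coeff (l i) f
      = (t (l i) : ℚ) / (l i).factorial := fun i _ => coeff_f (l i)
  rw [Finset.prod_congr rfl hc, Finset.prod_div_distrib]
  have hM := multinomial_count (fun i => l i) hsum
  have hMQ : ((univ.filter (fun g : Fin n → Fin k => ∀ i, (fib g i).card = l i)).card : ℚ)
      * ∏ i, ((l i).factorial : ℚ) = (n.factorial : ℚ) := by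
    push_cast [← hM]
    ring
  have h0 : (∏ i, ((l i).factorial : ℚ)) ≠ 0 :=
    Finset.prod_ne_zero_iff.2 fun i _ => Nat.cast_ne_zero.2 (Nat.factorial_ne_zero _)
  rw [← hMQ]
  push_cast
  field_simp

end L1


section Bijection
set_option linter.unusedSectionVars false

variable {X : Type*} [Fintype X] [DecidableEq X]

/-- Trees on each block of a partition. -/
def TreesOn (π : Partn X) : Type _ := ∀ B : ↥π.parts, AssemblyTree ↥(B.1)

instance (π : Partn X) : Finite (TreesOn π) := by
  unfold TreesOn; infer_instance

lemma sigma_treesOn_eq {π π' : Partn X} {tr : TreesOn π} {tr' : TreesOn π'} (h : π = π')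
    (htr : ∀ B (hB : B ∈ π.parts) (hB' : B ∈ π'.parts), tr ⟨B, hB⟩ = tr' ⟨B, hB'⟩) :
    (⟨π, tr⟩ : Σ ρ : Partn X, TreesOn ρ) = ⟨π', tr'⟩ := by
  subst h
  exact congrArg (Sigma.mk π) (funext fun B => htr B.1 B.2 B.2)

/-- Restriction of a tree to a vertex. -/
def restrict (T : AssemblyTree X) (B : Finset X) (hB : (B : Set X) ∈ T.verts) :
    AssemblyTree ↥B :=
  AssemblyTree.mk' {S : Set ↥B | Subtype.val '' S ∈ T.verts}
    (by
      have h : Subtype.val '' (Set.univ : Set ↥B) = (B : Set X) := by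
        ext x; simp
      show Subtype.val '' (Set.univ : Set ↥B) ∈ T.verts
      rw [h]; exact hB)
    (fun x => by
      show Subtype.val '' {x} ∈ T.verts
      rw [Set.image_singleton]
      exact T.singleton_mem x.1)
    (by
      intro S hS
      obtain ⟨y, hy⟩ := T.nonempty_mem _ hS
      obtain ⟨z, hz, -⟩ := hy
      exact ⟨z, hz⟩)
    (by
      intro S hS S' hS'
      rcases T.laminar _ hS _ hS' with h | h | h
      · exact Or.inl ((Set.image_subset_image_iff Subtype.val_injective).1 h)
      · exact Or.inr (Or.inl ((Set.image_subset_image_iff Subtype.val_injective).1 h))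
      · refine Or.inr (Or.inr ?_)
        rw [← Set.image_inter Subtype.val_injective] at h
        exact Set.image_eq_empty.1 h)

lemma mem_restrict {T : AssemblyTree X} {B : Finset X} {hB : (B : Set X) ∈ T.verts}
    {S : Set ↥B} : S ∈ (restrict T B hB).verts ↔ Subtype.val '' S ∈ T.verts := Iff.rfl

/-- The children of the root: maximal proper vertices. -/
def children (T : AssemblyTree X) : Set (Set X) :=
  {A | A ∈ T.verts ∧ A ≠ Set.univ ∧ ∀ B ∈ T.verts, A ⊆ B → B = A ∨ B = Set.univ}

lemma children_mem_verts {T : AssemblyTree X} {A : Set X} (h : A ∈ children T) :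
    A ∈ T.verts := h.1

lemma exists_child (T : AssemblyTree X) {A : Set X} (hA : A ∈ T.verts)
    (hAne : A ≠ Set.univ) : ∃ C ∈ children T, A ⊆ C := by
  have hfin : ({B | B ∈ T.verts ∧ A ⊆ B ∧ B ≠ Set.univ} : Set (Set X)).Finite :=
    Set.toFinite _
  obtain ⟨C, ⟨hCv, hAC, hCne⟩, hmax⟩ :=
    Set.Finite.exists_maximalFor id _ hfin ⟨A, hA, subset_rfl, hAne⟩
  refine ⟨C, ⟨hCv, hCne, ?_⟩, hAC⟩
  intro B hB hCB
  by_cases hBu : B = Set.univ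
  · exact Or.inr hBu
  · exact Or.inl (Set.Subset.antisymm (hmax ⟨hB, hAC.trans hCB, hBu⟩ hCB) hCB)

lemma children_disj {T : AssemblyTree X} {C₁ C₂ : Set X} (h₁ : C₁ ∈ children T)
    (h₂ : C₂ ∈ children T) (hne : C₁ ≠ C₂) : C₁ ∩ C₂ = ∅ := by
  rcases T.laminar _ h₁.1 _ h₂.1 with h | h | h
  · rcases h₁.2.2 C₂ h₂.1 h with h' | h'
    · exact absurd h'.symm hne
    · exact absurd h' h₂.2.1
  · rcases h₂.2.2 C₁ h₁.1 h with h' | h'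
    · exact absurd h' hne
    · exact absurd h' h₁.2.1
  · exact h

/-- The partition of the leaves given by the children of the root. -/
noncomputable def rootPartn (T : AssemblyTree X) (h2 : 2 ≤ Fintype.card X) : Partn X where
  parts := univ.filter (fun B : Finset X => (B : Set X) ∈ children T)
  nonempty_parts := by
    intro B hB
    have := T.nonempty_mem _ (children_mem_verts (mem_filter.1 hB).2)
    exact Finset.coe_nonempty.1 this
  disj := by
    intro B hB C hC hne x hxB hxC
    have h := children_disj (mem_filter.1 hB).2 (mem_filter.1 hC).2
      (fun h => hne (Finset.coe_injective h))
    have : x ∈ (B : Set X) ∩ (C : Set X) := ⟨hxB, hxC⟩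
    rw [h] at this
    exact this
  cover := by
    intro x
    have hsing : ({x} : Set X) ≠ Set.univ := by
      obtain ⟨y, hy⟩ := Fintype.exists_ne_of_one_lt_card (by omega) x
      intro h
      have : y ∈ ({x} : Set X) := h ▸ Set.mem_univ y
      exact hy this
    obtain ⟨C, hC, hxC⟩ := exists_child T (T.singleton_mem x) hsing
    refine ⟨(Set.toFinite C).toFinset, ?_, ?_⟩
    · rw [mem_filter]
      refine ⟨mem_univ _, ?_⟩
      rw [Set.Finite.coe_toFinset]
      exact hC
    · rw [Set.Finite.mem_toFinset]
      exact hxC (Set.mem_singleton x)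

lemma mem_rootPartn {T : AssemblyTree X} {h2 : 2 ≤ Fintype.card X} {B : Finset X} :
    B ∈ (rootPartn T h2).parts ↔ (B : Set X) ∈ children T := by
  simp [rootPartn]

/-- Gluing trees on the blocks of a partition into one tree. -/
def glue [Nonempty X] (π : Partn X) (tr : TreesOn π) : AssemblyTree X :=
  AssemblyTree.mk'
    ({Set.univ} ∪ ⋃ B : ↥π.parts, (Set.image (Subtype.val : ↥B.1 → X)) '' (tr B).verts)
    (Or.inl rfl)
    (fun x => by
      refine Or.inr (Set.mem_iUnion.2 ⟨⟨π.part x, π.part_mem x⟩, ?_⟩)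
      exact ⟨{⟨x, π.mem_part x⟩}, (tr _).singleton_mem _, by rw [Set.image_singleton]⟩)
    (by
      rintro A (rfl | hA)
      · exact Set.univ_nonempty
      · obtain ⟨B, S, hS, rfl⟩ := by
          simpa only [Set.mem_iUnion, Set.mem_image] using hA
        exact ((tr B).nonempty_mem S hS).image _)
    (by
      rintro A (rfl | hA) A' hA'
      · exact Or.inr (Or.inl (Set.subset_univ _))
      rcases hA' with rfl | hA'
      · exact Or.inl (Set.subset_univ _)
      obtain ⟨B, S, hS, rfl⟩ := by
        simpa only [Set.mem_iUnion, Set.mem_image] using hA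
      obtain ⟨B', S', hS', rfl⟩ := by
        simpa only [Set.mem_iUnion, Set.mem_image] using hA'
      by_cases hBB : B = B'
      · subst hBB
        rcases (tr B).laminar S hS S' hS' with h | h | h
        · exact Or.inl (Set.image_mono h)
        · exact Or.inr (Or.inl (Set.image_mono h))
        · refine Or.inr (Or.inr ?_)
          rw [← Set.image_inter Subtype.val_injective, h, Set.image_empty]
      · refine Or.inr (Or.inr ?_)
        apply Set.eq_empty_of_forall_notMem
        rintro x ⟨⟨x₁, hx₁, rfl⟩, ⟨x₂, hx₂, hx₂e⟩⟩
        have hmB : x₁.1 ∈ B.1 := x₁.2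
        have hmB' : x₁.1 ∈ B'.1 := hx₂e ▸ x₂.2
        exact π.disj B.1 B.2 B'.1 B'.2 (fun h => hBB (Subtype.ext h)) x₁.1 hmB hmB')

lemma mem_glue [Nonempty X] {π : Partn X} {tr : TreesOn π} {A : Set X} :
    A ∈ (glue π tr).verts
      ↔ A = Set.univ ∨ ∃ B : ↥π.parts, ∃ S ∈ (tr B).verts, Subtype.val '' S = A := by
  show A ∈ ({Set.univ} : Set (Set X)) ∪ _ ↔ _
  simp only [Set.mem_union, Set.mem_singleton_iff, Set.mem_iUnion, Set.mem_image]

lemma glue_block_mem [Nonempty X] {π : Partn X} {tr : TreesOn π} (B : ↥π.parts) :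
    (B.1 : Set X) ∈ (glue π tr).verts := by
  rw [mem_glue]
  refine Or.inr ⟨B, Set.univ, (tr B).univ_mem, ?_⟩
  ext x; simp

lemma part_ne_univ {π : Partn X} (hπ : π.parts ≠ {Finset.univ}) {B : Finset X}
    (hB : B ∈ π.parts) : (B : Set X) ≠ Set.univ := by
  intro h
  have hBu : B = Finset.univ := Finset.coe_injective (by rw [h, Finset.coe_univ])
  rw [hBu] at hB
  apply hπ
  apply Finset.eq_singleton_iff_unique_mem.2
  refine ⟨hB, fun C hC => ?_⟩
  by_contra hne
  obtain ⟨x, hx⟩ := π.nonempty_parts C hC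
  exact π.disj C hC Finset.univ hB hne x hx (mem_univ x)


lemma children_glue [Nonempty X] {π : Partn X} {tr : TreesOn π}
    (hπ : π.parts ≠ {Finset.univ}) {A : Set X} :
    A ∈ children (glue π tr) ↔ ∃ B ∈ π.parts, A = ↑B := by
  constructor
  · rintro ⟨hAv, hAne, hmax⟩
    rcases mem_glue.1 hAv with rfl | ⟨B, S, hS, rfl⟩
    · exact absurd rfl hAne
    have hsub : Subtype.val '' S ⊆ (B.1 : Set X) := by
      rintro x ⟨x₀, hx₀, rfl⟩
      exact x₀.2
    rcases hmax _ (glue_block_mem B) hsub with h | h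
    · exact ⟨B.1, B.2, h.symm⟩
    · exact absurd h (part_ne_univ hπ B.2)
  · rintro ⟨B, hB, rfl⟩
    refine ⟨glue_block_mem ⟨B, hB⟩, part_ne_univ hπ hB, ?_⟩
    intro C hCv hBC
    rcases mem_glue.1 hCv with rfl | ⟨B', S', hS', rfl⟩
    · exact Or.inr rfl
    left
    have hsub : Subtype.val '' S' ⊆ (B'.1 : Set X) := by
      rintro x ⟨x₀, hx₀, rfl⟩
      exact x₀.2
    obtain ⟨x, hx⟩ := π.nonempty_parts B hB
    have hxB : x ∈ (B : Set X) := hx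
    have hxB' : x ∈ B'.1 := hsub (hBC hxB)
    have hBB' : B = B'.1 := π.eq_of_mem hB B'.2 hx hxB'
    exact Set.Subset.antisymm (hBB' ▸ hsub) hBC

lemma restrict_glue [Nonempty X] {π : Partn X} {tr : TreesOn π}
    (hπ : π.parts ≠ {Finset.univ}) {B : Finset X} (hB : B ∈ π.parts) (S : Set ↥B) :
    Subtype.val '' S ∈ (glue π tr).verts ↔ S ∈ (tr ⟨B, hB⟩).verts := by
  constructor
  · intro h
    rcases mem_glue.1 h with hu | ⟨B', S', hS', heq⟩
    · exfalso
      apply part_ne_univ hπ hB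
      apply Set.Subset.antisymm (Set.subset_univ _)
      rw [← hu]
      rintro x ⟨x₀, hx₀, rfl⟩
      exact x₀.2
    · obtain ⟨y, hy⟩ := (tr B').nonempty_mem S' hS'
      have hy1 : y.1 ∈ Subtype.val '' S := heq ▸ ⟨y, hy, rfl⟩
      have hyB : y.1 ∈ (B : Set X) := by
        obtain ⟨z, hz, hze⟩ := hy1
        exact hze ▸ z.2
      have hBB' : B'.1 = B := π.eq_of_mem B'.2 hB y.2 hyB
      have hB'eq : B' = (⟨B, hB⟩ : ↥π.parts) := Subtype.ext hBB'
      subst hB'eq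
      have : S' = S := Set.image_injective.2 Subtype.val_injective heq
      exact this ▸ hS'
  · intro h
    exact mem_glue.2 (Or.inr ⟨⟨B, hB⟩, S, h, rfl⟩)

noncomputable def backward (T : AssemblyTree X) (h2 : 2 ≤ Fintype.card X) :
    Σ π : Partn X, TreesOn π :=
  ⟨rootPartn T h2, fun B => restrict T B.1 (children_mem_verts (mem_rootPartn.1 B.2))⟩

lemma glue_backward [Nonempty X] (T : AssemblyTree X) (h2 : 2 ≤ Fintype.card X) :
    glue (rootPartn T h2) (backward T h2).2 = T := by
  ext1
  apply Set.ext
  intro A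
  refine mem_glue.trans ?_
  constructor
  · rintro (rfl | ⟨B, S, hS, rfl⟩)
    · exact T.univ_mem
    · exact hS
  · intro hA
    by_cases hAu : A = Set.univ
    · exact Or.inl hAu
    obtain ⟨C, hC, hAC⟩ := exists_child T hA hAu
    have hBF : (Set.toFinite C).toFinset ∈ (rootPartn T h2).parts :=
      mem_rootPartn.2 (by rw [Set.Finite.coe_toFinset]; exact hC)
    have himg : Subtype.val '' (Subtype.val ⁻¹' A : Set ↥((Set.toFinite C).toFinset)) = A := by
      ext x
      constructor
      · rintro ⟨⟨y, hy⟩, hyA, rfl⟩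
        exact hyA
      · intro hxA
        refine ⟨⟨x, ?_⟩, hxA, rfl⟩
        rw [Set.Finite.mem_toFinset]
        exact hAC hxA
    refine Or.inr ⟨⟨(Set.toFinite C).toFinset, hBF⟩, Subtype.val ⁻¹' A, ?_, himg⟩
    show Subtype.val '' (Subtype.val ⁻¹' A) ∈ T.verts
    rw [himg]
    exact hA

lemma backward_glue [Nonempty X] {π : Partn X} {tr : TreesOn π}
    (hπ : π.parts ≠ {Finset.univ}) (h2 : 2 ≤ Fintype.card X) :
    backward (glue π tr) h2 = ⟨π, tr⟩ := by
  have hpe : rootPartn (glue π tr) h2 = π := by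
    apply Partn.ext
    apply Finset.ext
    intro B
    rw [mem_rootPartn, children_glue hπ]
    constructor
    · rintro ⟨B', hB', he⟩
      rwa [Finset.coe_injective he]
    · intro hB
      exact ⟨B, hB, rfl⟩
  apply sigma_treesOn_eq hpe
  intro B hB hB'
  apply AssemblyTree.ext
  apply Set.ext
  intro S
  exact (mem_restrict).trans (restrict_glue hπ hB' S)

lemma rootPartn_ne_top (T : AssemblyTree X) (h2 : 2 ≤ Fintype.card X) :
    (rootPartn T h2).parts ≠ {Finset.univ} := by
  intro h
  have hu : Finset.univ ∈ (rootPartn T h2).parts := by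
    rw [h]; exact Finset.mem_singleton_self _
  have := (mem_rootPartn.1 hu).2.1
  exact this (by rw [Finset.coe_univ])

noncomputable def mainEquiv [Nonempty X] (h2 : 2 ≤ Fintype.card X) :
    {p : Σ π : Partn X, TreesOn π // p.1.parts ≠ {Finset.univ}} ≃ AssemblyTree X where
  toFun p := glue p.1.1 p.1.2
  invFun T := ⟨backward T h2, rootPartn_ne_top T h2⟩
  left_inv := by
    rintro ⟨⟨π, tr⟩, hπ⟩
    exact Subtype.ext (backward_glue hπ h2)
  right_inv T := glue_backward T h2

def topPartn [Nonempty X] : Partn X where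
  parts := {Finset.univ}
  nonempty_parts := by
    intro B hB
    rw [Finset.mem_singleton.1 hB]
    exact Finset.univ_nonempty
  disj := by
    intro B hB C hC hne
    rw [Finset.mem_singleton.1 hB, Finset.mem_singleton.1 hC] at hne
    exact absurd rfl hne
  cover := fun x => ⟨Finset.univ, Finset.mem_singleton_self _, Finset.mem_univ x⟩

noncomputable def topEquiv [Nonempty X] :
    {p : Σ π : Partn X, TreesOn π // p.1.parts = {Finset.univ}} ≃ AssemblyTree X where
  toFun p := AssemblyTree.relabelFun (Equiv.subtypeUnivEquiv (fun x => Finset.mem_univ x))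
    (p.1.2 ⟨Finset.univ, by rw [p.2]; exact Finset.mem_singleton_self _⟩)
  invFun T := ⟨⟨topPartn, fun B => AssemblyTree.relabelFun
    (Equiv.subtypeUnivEquiv (fun x => by
      rw [Finset.mem_singleton.1 B.2]; exact Finset.mem_univ x)).symm T⟩, rfl⟩
  left_inv := by
    rintro ⟨⟨π, tr⟩, hπ⟩
    apply Subtype.ext
    apply sigma_treesOn_eq (Partn.ext (by simpa [topPartn] using hπ.symm))
    intro B hB hB'
    have hBu : B = Finset.univ := Finset.mem_singleton.1 hB
    subst hBu
    exact AssemblyTree.relabelFun_relabelFun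
      (Equiv.subtypeUnivEquiv (fun x => Finset.mem_univ x)) (tr ⟨Finset.univ, hB'⟩)
  right_inv := by
    intro T
    show AssemblyTree.relabelFun _ (AssemblyTree.relabelFun _ T) = T
    exact AssemblyTree.relabelFun_relabelFun
      (Equiv.subtypeUnivEquiv (fun x => Finset.mem_univ x)).symm T

lemma card_sigma_trees [Nonempty X] (h2 : 2 ≤ Fintype.card X) :
    Nat.card (Σ π : Partn X, TreesOn π) = 2 * Nat.card (AssemblyTree X) := by
  classical
  rw [← Nat.card_congr
    (Equiv.sumCompl (fun p : Σ π : Partn X, TreesOn π => p.1.parts = {Finset.univ})),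
    Nat.card_sum, Nat.card_congr topEquiv, Nat.card_congr (mainEquiv h2), two_mul]

end Bijection

section Final

/-- Sum over all partitions of products of tree counts on blocks. -/
noncomputable def S (n : ℕ) : ℕ := ∑ π : Partn (Fin n), ∏ B ∈ π.parts, t B.card

lemma card_treesOn {X : Type*} [Fintype X] [DecidableEq X] (π : Partn X) :
    Nat.card (TreesOn π) = ∏ B ∈ π.parts, t B.card := by
  have h1 : Nat.card (TreesOn π) = ∏ B : ↥π.parts, Nat.card (AssemblyTree ↥(B.1)) :=
    Nat.card_pi
  rw [h1]
  rw [Finset.prod_congr rfl (fun B _ => by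
    rw [AssemblyTree.card_eq, Fintype.card_coe] : ∀ B ∈ (univ : Finset ↥π.parts), _ = _)]
  exact Finset.prod_coe_sort π.parts (fun B => t B.card)

lemma S_eq_card (n : ℕ) : S n = Nat.card (Σ π : Partn (Fin n), TreesOn π) := by
  letI : ∀ π : Partn (Fin n), Fintype (TreesOn π) := fun π => Fintype.ofFinite _
  rw [Nat.card_eq_fintype_card, Fintype.card_sigma, S]
  apply Finset.sum_congr rfl
  intro π _
  rw [← card_treesOn, Nat.card_eq_fintype_card]

lemma S_ge_two (n : ℕ) (hn : 2 ≤ n) : S n = 2 * t n := by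
  haveI : Nonempty (Fin n) := ⟨⟨0, by omega⟩⟩
  rw [S_eq_card, card_sigma_trees (by simpa using hn)]
  rfl

lemma S_zero : S 0 = 1 := by
  letI : Unique (Partn (Fin 0)) :=
    { default := ⟨∅, by simp, by simp, fun x => x.elim0⟩
      uniq := by
        intro π
        apply Partn.ext
        apply Finset.eq_empty_iff_forall_notMem.2
        intro B hB
        obtain ⟨x, -⟩ := π.nonempty_parts B hB
        exact x.elim0 }
  rw [S, Fintype.sum_unique]
  show ∏ B ∈ (∅ : Finset (Finset (Fin 0))), t B.card = 1
  exact Finset.prod_empty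

lemma S_one : S 1 = 1 := by
  haveI : Nonempty (Fin 1) := ⟨0⟩
  letI : Unique (Partn (Fin 1)) :=
    { default := topPartn
      uniq := by
        intro π
        apply Partn.ext
        show π.parts = {Finset.univ}
        apply Finset.eq_singleton_iff_unique_mem.2
        constructor
        · obtain ⟨B, hB, hxB⟩ := π.cover 0
          have hBu : B = Finset.univ :=
            Finset.eq_univ_iff_forall.2 (fun y => by rwa [Subsingleton.elim y (0 : Fin 1)])
          rwa [hBu] at hB
        · intro C hC
          obtain ⟨x, hx⟩ := π.nonempty_parts C hC
          exact Finset.eq_univ_iff_forall.2 (fun y => by rwa [Subsingleton.elim y x]) }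
  rw [S, Fintype.sum_unique]
  show ∏ B ∈ ({Finset.univ} : Finset (Finset (Fin 1))), t B.card = 1
  rw [Finset.prod_singleton, Finset.card_univ]
  simp [t_one]

lemma coeff_expOf (n : ℕ) :
    PowerSeries.coeff n (expOf f) = (S n : ℚ) / n.factorial := by
  rw [expOf, PowerSeries.coeff_mk]
  have hfact : (n.factorial : ℚ) ≠ 0 := Nat.cast_ne_zero.2 n.factorial_ne_zero
  rw [eq_div_iff hfact, Finset.sum_mul]
  have hterm : ∀ k ∈ range (n + 1),
      (PowerSeries.coeff n (f ^ k) / (k.factorial : ℚ)) * (n.factorial : ℚ)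
        = ((∑ π ∈ univ.filter (fun π : Partn (Fin n) => π.parts.card = k),
            ∏ B ∈ π.parts, t B.card : ℕ) : ℚ) := by
    intro k _
    have hkfact : (k.factorial : ℚ) ≠ 0 := Nat.cast_ne_zero.2 k.factorial_ne_zero
    have key : (n.factorial : ℚ) * PowerSeries.coeff n (f ^ k)
        = ((k.factorial * ∑ π ∈ univ.filter (fun π : Partn (Fin n) => π.parts.card = k),
            ∏ B ∈ π.parts, t B.card : ℕ) : ℚ) := by
      rw [L1 k n, ← Nat.cast_sum]
      exact_mod_cast congrArg (Nat.cast (R := ℚ)) (sum_weights (Fin n) k)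
    rw [div_mul_eq_mul_div, mul_comm (PowerSeries.coeff n (f ^ k)) ((n.factorial : ℚ)), key]
    push_cast
    rw [mul_div_cancel_left₀ _ hkfact]
  rw [Finset.sum_congr rfl hterm, ← Nat.cast_sum]
  congr 1
  rw [S]
  have hmaps : ∀ π ∈ (univ : Finset (Partn (Fin n))), π.parts.card ∈ range (n + 1) := by
    intro π _
    rw [mem_range]
    have := π.card_parts_le
    simp only [Fintype.card_fin] at this
    omega
  exact Finset.sum_fiberwise_of_maps_to hmaps (fun π => ∏ B ∈ π.parts, t B.card)

end Final

theorem functional_equation : 1 - PowerSeries.X + 2 * f = expOf f := by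
  ext n
  rw [show (2 : PowerSeries ℚ) * f = f + f from two_mul f, map_add, map_sub, map_add,
    coeff_expOf]
  match n with
  | 0 =>
    rw [S_zero]
    simp [coeff_f, t_zero]
  | 1 =>
    rw [S_one]
    simp [coeff_f, t_one]
  | (m + 2) =>
    rw [S_ge_two (m + 2) (by omega)]
    rw [coeff_f]
    simp only [PowerSeries.coeff_one, PowerSeries.coeff_X]
    push_cast
    norm_num
    ring
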